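/- As σ → 0 with |β₁| < δ fixed, the rejection probability P(|N(β₁,σ²)| < f_α(δ,σ)) converges to 1; as σ → 0 with |β₁| > δ fixed, it converges to 0. Hence the folded-normal equivalence test is consistent. -/

import Mathlib

open MeasureTheory ProbabilityTheory Filter

/-- Standard normal CDF. -/
noncomputable def Phi (t : ℝ) : ℝ := ((gaussianReal 0 1) (Set.Iic t)).toReal

lemma Phi_eq_cdf : Phi = fun t => ProbabilityTheory.cdf (gaussianReal 0 1) t :=
  funext fun t => (ProbabilityTheory.cdf_eq_real _ t).symm

lemma Phi_mono : Monotone Phi := Phi_eq_cdf ▸ ProbabilityTheory.monotone_cdf _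
lemma Phi_tendsto_top : Tendsto Phi atTop (nhds 1) := Phi_eq_cdf ▸ tendsto_cdf_atTop _
lemma Phi_tendsto_bot : Tendsto Phi atBot (nhds 0) := Phi_eq_cdf ▸ tendsto_cdf_atBot _
lemma Phi_nonneg (x : ℝ) : 0 ≤ Phi x := Phi_eq_cdf ▸ cdf_nonneg _ x
lemma Phi_le_one (x : ℝ) : Phi x ≤ 1 := Phi_eq_cdf ▸ cdf_le_one _ x

lemma gauss_Ioo {a b : ℝ} (hab : a ≤ b) :
    ((gaussianReal 0 1) (Set.Ioo a b)).toReal = Phi b - Phi a := by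
  have hac : gaussianReal 0 1 ≪ (volume : Measure ℝ) :=
    gaussianReal_absolutelyContinuous 0 one_ne_zero
  have hna : NoAtoms (gaussianReal 0 1) := ⟨fun x => hac (measure_singleton x)⟩
  have h1 : gaussianReal 0 1 (Set.Ioo a b) = gaussianReal 0 1 (Set.Ioc a b) :=
    measure_congr (MeasureTheory.Ioo_ae_eq_Ioc' (hac (measure_singleton b)))
  have h2 : gaussianReal 0 1 (Set.Iic a) + gaussianReal 0 1 (Set.Ioc a b)
      = gaussianReal 0 1 (Set.Iic b) := by
    rw [← measure_union (Set.Iic_disjoint_Ioc le_rfl) measurableSet_Ioc,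
      Set.Iic_union_Ioc_eq_Iic hab]
  have hfin : ∀ s : Set ℝ, gaussianReal 0 1 s ≠ ⊤ := fun s => measure_ne_top _ s
  have h3 := congrArg ENNReal.toReal h2
  rw [ENNReal.toReal_add (hfin _) (hfin _)] at h3
  simp only [Phi, h1]
  linarith

lemma gauss_abs (β σ c : ℝ) (hσ : 0 < σ) (hc : 0 ≤ c) :
    ((gaussianReal β ⟨σ ^ 2, sq_nonneg σ⟩) {x : ℝ | |x| < c}).toReal
      = Phi ((c - β) / σ) - Phi ((-c - β) / σ) := by
  have hmap : gaussianReal β ⟨σ ^ 2, sq_nonneg σ⟩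
      = ((gaussianReal 0 1).map (σ * ·)).map (· + β) := by
    rw [gaussianReal_map_const_mul, gaussianReal_map_add_const, mul_zero, zero_add, mul_one]
    rfl
  have hcomp : ((gaussianReal 0 1).map (σ * ·)).map (· + β)
      = (gaussianReal 0 1).map (fun x => σ * x + β) := by
    rw [Measure.map_map (measurable_id'.add_const β) (measurable_const_mul σ)]
    rfl
  have hS : MeasurableSet {x : ℝ | |x| < c} :=
    measurableSet_lt continuous_abs.measurable measurable_const
  have hpre : (fun x => σ * x + β) ⁻¹' {x : ℝ | |x| < c}
      = Set.Ioo ((-c - β) / σ) ((c - β) / σ) := by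
    ext x
    simp only [Set.mem_preimage, Set.mem_setOf_eq, abs_lt, Set.mem_Ioo,
      div_lt_iff₀ hσ, lt_div_iff₀ hσ]
    constructor <;> intro h <;> constructor <;> nlinarith [h.1, h.2]
  rw [hmap, hcomp, Measure.map_apply (by fun_prop) hS, hpre,
    gauss_Ioo ((div_le_div_iff_of_pos_right hσ).mpr (by linarith))]

/-- Consistency of the folded-normal equivalence test: with `f_α(δ,σ)` the `α`-quantile
of the folded normal with mean `δ > 0` and standard deviation `σ`, the rejection
probability `P(|N(β₁,σ²)| < f_α(δ,σ))` tends to `1` as `σ → 0⁺` when `|β₁| < δ`, and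
tends to `0` when `|β₁| > δ`. -/
theorem foldedNormal_test_consistent (δ α β₁ : ℝ) (hδ : 0 < δ)
    (hα : α ∈ Set.Ioo (0 : ℝ) 1) (fα : ℝ → ℝ)
    (hq : ∀ σ : ℝ, 0 < σ → Phi ((fα σ - δ) / σ) - Phi ((-(fα σ) - δ) / σ) = α) :
    (|β₁| < δ →
      Tendsto (fun σ : ℝ =>
          ((gaussianReal β₁ ⟨σ ^ 2, sq_nonneg σ⟩) {x : ℝ | |x| < fα σ}).toReal)
        (nhdsWithin 0 (Set.Ioi 0)) (nhds 1)) ∧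
    (δ < |β₁| →
      Tendsto (fun σ : ℝ =>
          ((gaussianReal β₁ ⟨σ ^ 2, sq_nonneg σ⟩) {x : ℝ | |x| < fα σ}).toReal)
        (nhdsWithin 0 (Set.Ioi 0)) (nhds 0)) := by
  obtain ⟨hα0, hα1⟩ := hα
  have hfpos : ∀ σ : ℝ, 0 < σ → 0 < fα σ := by
    intro σ hσ
    by_contra h
    push_neg at h
    have h1 : (fα σ - δ) / σ ≤ (-(fα σ) - δ) / σ :=
      (div_le_div_iff_of_pos_right hσ).mpr (by linarith)
    have := Phi_mono h1
    have heq := hq σ hσ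
    linarith
  obtain ⟨a, ha⟩ : ∃ a, Phi a < α := (Phi_tendsto_bot.eventually (gt_mem_nhds hα0)).exists
  obtain ⟨b, hb⟩ : ∃ b, (1 + α) / 2 < Phi b :=
    (Phi_tendsto_top.eventually (lt_mem_nhds (by linarith : (1 + α) / 2 < 1))).exists
  have hinv : Tendsto (fun σ : ℝ => σ⁻¹) (nhdsWithin 0 (Set.Ioi 0)) atTop :=
    tendsto_inv_nhdsGT_zero
  -- lower bound on fα
  have hlow : ∀ σ : ℝ, 0 < σ → δ + a * σ < fα σ := by
    intro σ hσ
    have heq := hq σ hσ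
    have h1 : α ≤ Phi ((fα σ - δ) / σ) := by
      have := Phi_nonneg ((-(fα σ) - δ) / σ); linarith
    have h2 : a < (fα σ - δ) / σ := by
      by_contra h
      push_neg at h
      have := Phi_mono h
      linarith
    have := (lt_div_iff₀ hσ).mp h2
    linarith
  -- upper bound on fα, eventually
  have hmδ : Tendsto (fun σ : ℝ => -δ / σ) (nhdsWithin 0 (Set.Ioi 0)) atBot := by
    have h1 : Tendsto (fun σ : ℝ => δ * σ⁻¹) (nhdsWithin 0 (Set.Ioi 0)) atTop :=
      hinv.const_mul_atTop hδ
    have h2 := tendsto_neg_atTop_atBot.comp h1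
    refine h2.congr fun σ => ?_
    simp [Function.comp, neg_div, div_eq_mul_inv]
  have hup : ∀ᶠ σ in nhdsWithin 0 (Set.Ioi (0:ℝ)), fα σ < δ + b * σ := by
    have h2 : ∀ᶠ σ in nhdsWithin 0 (Set.Ioi (0:ℝ)), Phi (-δ / σ) < (1 - α) / 2 :=
      (Phi_tendsto_bot.comp hmδ).eventually (gt_mem_nhds (by linarith : (0:ℝ) < (1 - α) / 2))
    filter_upwards [h2, self_mem_nhdsWithin] with σ hσ2 hσmem
    have hσ : (0:ℝ) < σ := hσmem
    have heq := hq σ hσ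
    have hf := hfpos σ hσ
    have h3 : (-(fα σ) - δ) / σ ≤ -δ / σ := (div_le_div_iff_of_pos_right hσ).mpr (by linarith)
    have h4 : Phi ((fα σ - δ) / σ) < Phi b := by
      have := Phi_mono h3; linarith
    have h5 : (fα σ - δ) / σ < b := by
      by_contra h
      push_neg at h
      exact absurd (Phi_mono h) (not_le.mpr h4)
    have := (div_lt_iff₀ hσ).mp h5
    linarith
  -- eventual formula
  have hEq : ∀ᶠ σ in nhdsWithin 0 (Set.Ioi (0:ℝ)),
      Phi ((fα σ - β₁) / σ) - Phi ((-(fα σ) - β₁) / σ)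
      = ((gaussianReal β₁ ⟨σ ^ 2, sq_nonneg σ⟩) {x : ℝ | |x| < fα σ}).toReal := by
    filter_upwards [self_mem_nhdsWithin] with σ hσmem
    exact (gauss_abs β₁ σ (fα σ) hσmem (hfpos σ hσmem).le).symm
  constructor
  · -- |β₁| < δ
    intro hβ
    rw [abs_lt] at hβ
    have hU : Tendsto (fun σ : ℝ => (fα σ - β₁) / σ) (nhdsWithin 0 (Set.Ioi 0)) atTop := by
      have hbase : Tendsto (fun σ : ℝ => a + (δ - β₁) * σ⁻¹) (nhdsWithin 0 (Set.Ioi 0)) atTop :=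
        tendsto_atTop_add_const_left _ a (hinv.const_mul_atTop (by linarith))
      refine tendsto_atTop_mono' _ ?_ hbase
      filter_upwards [self_mem_nhdsWithin] with σ hσmem
      have hσ : (0:ℝ) < σ := hσmem
      have h1 : ((δ + a * σ) - β₁) / σ ≤ (fα σ - β₁) / σ :=
        (div_le_div_iff_of_pos_right hσ).mpr (by linarith [hlow σ hσ])
      have h2 : ((δ + a * σ) - β₁) / σ = a + (δ - β₁) * σ⁻¹ := by
        field_simp
        ring
      linarith
    have hL : Tendsto (fun σ : ℝ => (-(fα σ) - β₁) / σ) (nhdsWithin 0 (Set.Ioi 0)) atBot := by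
      have hbase : Tendsto (fun σ : ℝ => -a + (-δ - β₁) * σ⁻¹) (nhdsWithin 0 (Set.Ioi 0)) atBot := by
        have h0 : Tendsto (fun σ : ℝ => (δ + β₁) * σ⁻¹) (nhdsWithin 0 (Set.Ioi 0)) atTop :=
          hinv.const_mul_atTop (by linarith)
        have h1 := tendsto_neg_atTop_atBot.comp h0
        have h2 : Tendsto (fun σ : ℝ => (-δ - β₁) * σ⁻¹) (nhdsWithin 0 (Set.Ioi 0)) atBot := by
          refine h1.congr fun σ => ?_
          simp [Function.comp]
          ring
        exact tendsto_atBot_add_const_left _ (-a) h2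
      refine tendsto_atBot_mono' _ ?_ hbase
      filter_upwards [self_mem_nhdsWithin] with σ hσmem
      have hσ : (0:ℝ) < σ := hσmem
      have h1 : (-(fα σ) - β₁) / σ ≤ ((-(δ + a * σ)) - β₁) / σ :=
        (div_le_div_iff_of_pos_right hσ).mpr (by linarith [hlow σ hσ])
      have h2 : ((-(δ + a * σ)) - β₁) / σ = -a + (-δ - β₁) * σ⁻¹ := by
        field_simp
        ring
      linarith
    have hlim : Tendsto (fun σ : ℝ => Phi ((fα σ - β₁) / σ) - Phi ((-(fα σ) - β₁) / σ))
        (nhdsWithin 0 (Set.Ioi 0)) (nhds 1) := by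
      have := (Phi_tendsto_top.comp hU).sub (Phi_tendsto_bot.comp hL)
      simpa using this
    exact hlim.congr' hEq
  · -- δ < |β₁|
    intro hβ
    rw [lt_abs] at hβ
    rcases hβ with hβ | hβ
    · -- δ < β₁
      refine squeeze_zero' (g := fun σ : ℝ => Phi (b + (δ - β₁) * σ⁻¹))
        (Eventually.of_forall fun σ => ENNReal.toReal_nonneg) ?_ ?_
      · filter_upwards [hup, self_mem_nhdsWithin] with σ hσup hσmem
        have hσ : (0:ℝ) < σ := hσmem
        rw [gauss_abs β₁ σ (fα σ) hσ (hfpos σ hσ).le]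
        have hUb : (fα σ - β₁) / σ ≤ b + (δ - β₁) * σ⁻¹ := by
          have h1 : (fα σ - β₁) / σ ≤ ((δ + b * σ) - β₁) / σ :=
            (div_le_div_iff_of_pos_right hσ).mpr (by linarith)
          have h2 : ((δ + b * σ) - β₁) / σ = b + (δ - β₁) * σ⁻¹ := by
            field_simp; ring
          linarith
        have h3 := Phi_mono hUb
        have h4 := Phi_nonneg ((-(fα σ) - β₁) / σ)
        linarith
      · have h0 : Tendsto (fun σ : ℝ => (β₁ - δ) * σ⁻¹) (nhdsWithin 0 (Set.Ioi 0)) atTop :=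
          hinv.const_mul_atTop (by linarith)
        have h1 := tendsto_neg_atTop_atBot.comp h0
        have h2 : Tendsto (fun σ : ℝ => (δ - β₁) * σ⁻¹) (nhdsWithin 0 (Set.Ioi 0)) atBot := by
          refine h1.congr fun σ => ?_
          simp [Function.comp]; ring
        exact Phi_tendsto_bot.comp (tendsto_atBot_add_const_left _ b h2)
    · -- δ < -β₁
      refine squeeze_zero' (g := fun σ : ℝ => 1 - Phi (-b + (-δ - β₁) * σ⁻¹))
        (Eventually.of_forall fun σ => ENNReal.toReal_nonneg) ?_ ?_
      · filter_upwards [hup, self_mem_nhdsWithin] with σ hσup hσmem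
        have hσ : (0:ℝ) < σ := hσmem
        rw [gauss_abs β₁ σ (fα σ) hσ (hfpos σ hσ).le]
        have hLb : -b + (-δ - β₁) * σ⁻¹ ≤ (-(fα σ) - β₁) / σ := by
          have h1 : ((-(δ + b * σ)) - β₁) / σ ≤ (-(fα σ) - β₁) / σ :=
            (div_le_div_iff_of_pos_right hσ).mpr (by linarith)
          have h2 : ((-(δ + b * σ)) - β₁) / σ = -b + (-δ - β₁) * σ⁻¹ := by
            field_simp; ring
          linarith
        have h3 := Phi_mono hLb
        have h4 := Phi_le_one ((fα σ - β₁) / σ)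
        linarith
      · have h0 : Tendsto (fun σ : ℝ => (-δ - β₁) * σ⁻¹) (nhdsWithin 0 (Set.Ioi 0)) atTop :=
          hinv.const_mul_atTop (by linarith)
        have h1 : Tendsto (fun σ : ℝ => -b + (-δ - β₁) * σ⁻¹) (nhdsWithin 0 (Set.Ioi 0)) atTop :=
          tendsto_atTop_add_const_left _ (-b) h0
        have h2 := (tendsto_const_nhds (x := (1:ℝ))).sub (Phi_tendsto_top.comp h1)
        simpa using h2
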